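/- Shifted-cylinder measure lemma: Let n be a positive integer and K₁ > 1 a fixed constant. For a standard parabolic cylinder Q = Q_r(Y) = B_r(y) × (s−r², s), define the shifted cylinder Q̂ := B_r(y) × (s+r², s+K₁r²). Then for an arbitrary family 𝒜 of standard parabolic cylinders in ℝ^{n+1}, the sets E := ⋃_{Q ∈ 𝒜} Q and Ê := ⋃_{Q ∈ 𝒜} Q̂ satisfy |Ê| ≥ q₁·|E|, where q₁ := (K₁−1)/(K₁+1). -/

import Mathlib

open MeasureTheory ENNReal Metric Set RealInnerProductSpace

noncomputable section

/-- `n`-dimensional Euclidean space. -/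
abbrev En (n : ℕ) : Type := EuclideanSpace ℝ (Fin n)

variable {n : ℕ}

/-- Time derivative `u_t`. -/
def Dt (u : En n × ℝ → ℝ) (X : En n × ℝ) : ℝ :=
  deriv (fun t => u (X.1, t)) X.2

/-- First spatial derivative `D_i u`. -/
def Dx (u : En n × ℝ → ℝ) (i : Fin n) (X : En n × ℝ) : ℝ :=
  fderiv ℝ (fun x => u (x, X.2)) X.1 (EuclideanSpace.single i 1)

/-- Second spatial derivative `D_{ij} u`. -/
def Dxx (u : En n × ℝ → ℝ) (i j : Fin n) (X : En n × ℝ) : ℝ :=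
  Dx (Dx u j) i X

/-- `u` is of class `C^{2,1}` on `Q`: `u`, `D_i u`, `D_{ij} u`, `u_t` exist and are
continuous on `Q`. -/
structure IsC21 (u : En n × ℝ → ℝ) (Q : Set (En n × ℝ)) : Prop where
  cont : ContinuousOn u Q
  diff_t : ∀ X ∈ Q, DifferentiableAt ℝ (fun t => u (X.1, t)) X.2
  diff_x : ∀ X ∈ Q, DifferentiableAt ℝ (fun x => u (x, X.2)) X.1
  diff_xx : ∀ j : Fin n, ∀ X ∈ Q, DifferentiableAt ℝ (fun x => Dx u j (x, X.2)) X.1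
  cont_t : ContinuousOn (Dt u) Q
  cont_x : ∀ i, ContinuousOn (Dx u i) Q
  cont_xx : ∀ i j, ContinuousOn (Dxx u i j) Q

/-- Uniform parabolicity with constant `ν` on `Q`:
`ν⁻¹|ξ|² ≤ Σ a_ij ξ_i ξ_j` and `Σ a_ij² ≤ ν²`. -/
def UnifParabolic (ν : ℝ) (a : En n × ℝ → Matrix (Fin n) (Fin n) ℝ)
    (Q : Set (En n × ℝ)) : Prop :=
  ∀ X ∈ Q, (∀ ξ : Fin n → ℝ, ν⁻¹ * (∑ i, ξ i ^ 2) ≤ ∑ i, ∑ j, a X i j * ξ i * ξ j) ∧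
    (∑ i, ∑ j, (a X i j) ^ 2) ≤ ν ^ 2

/-- `Lu = Σ_{ij} a_ij D_ij u + Σ_i b_i D_i u`. -/
def Lop (a : En n × ℝ → Matrix (Fin n) (Fin n) ℝ) (b : En n × ℝ → En n)
    (u : En n × ℝ → ℝ) (X : En n × ℝ) : ℝ :=
  (∑ i, ∑ j, a X i j * Dxx u i j X) + ∑ i, b X i * Dx u i X

/-- `∫ (ess sup_t |f(x,t)|)ⁿ dx`, the `n`-th power of the `L^n_x L^∞_t` norm of `f`
over the set `Q ⊆ ℝⁿ × ℝ`. -/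
def LxnLtinfPow {E : Type*} [NNNorm E] (f : En n × ℝ → E) (Q : Set (En n × ℝ)) : ℝ≥0∞ :=
  ∫⁻ x, (essSup (fun t => (‖f (x, t)‖₊ : ℝ≥0∞)) (volume.restrict {t | (x, t) ∈ Q})) ^ n

/-- The `L^n_x L^∞_t` norm of `f` over `Q`. -/
def LxnLtinf {E : Type*} [NNNorm E] (f : En n × ℝ → E) (Q : Set (En n × ℝ)) : ℝ≥0∞ :=
  (LxnLtinfPow f Q) ^ (1 / (n : ℝ))

/-- The box `B_ρ(y) × (t₁, t₂)`. -/
def box (y : En n) (ρ t₁ t₂ : ℝ) : Set (En n × ℝ) := ball y ρ ×ˢ Ioo t₁ t₂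

/-- The standard parabolic cylinder `Q_r(Y) = B_r(y) × (s - r², s)`. -/
def pcyl (Y : En n × ℝ) (r : ℝ) : Set (En n × ℝ) := box Y.1 r (Y.2 - r ^ 2) Y.2

/-- The slanted cylinder `V_r(Y) = {(x,t) : |x - (t/s)y| < r, 0 < t < s}`. -/
def slantCyl (Y : En n × ℝ) (r : ℝ) : Set (En n × ℝ) :=
  {X | ‖X.1 - (X.2 / Y.2) • Y.1‖ < r ∧ 0 < X.2 ∧ X.2 < Y.2}

/-- Supremum of the positive part `u₊` over a set `A`. -/
def supPos (u : En n × ℝ → ℝ) (A : Set (En n × ℝ)) : ℝ :=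
  sSup ((fun X => max (u X) 0) '' A)

/-- `Ω` is a Lipschitz domain with character `(rΩ, mΩ)`: at every boundary point `y`
there is a coordinate frame, encoded by the unit "vertical" direction `e`, in which
`Ω ∩ B_{rΩ}(y)` is the region above the graph of an `mΩ`-Lipschitz function `φ`
of the tangential variables. -/
def IsLipschitzDomain (Ω : Set (En n)) (rΩ mΩ : ℝ) : Prop :=
  0 < rΩ ∧ 0 ≤ mΩ ∧
  ∀ y ∈ frontier Ω, ∃ (e : En n) (φ : En n → ℝ),
    ‖e‖ = 1 ∧ LipschitzWith (Real.toNNReal mΩ) φ ∧ φ 0 = 0 ∧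
    (∀ x, x ∈ Ω ∩ ball y rΩ ↔
      dist x y < rΩ ∧ φ ((x - y) - ⟪x - y, e⟫ • e) < ⟪x - y, e⟫) ∧
    (∀ ρ : ℝ, 0 < ρ → ρ ≤ rΩ → y + ρ • e ∈ Ω)

namespace SCAux

/-- real-valued measure of `A ∩ (x, ∞)`. -/
def mIoi (A : Set ℝ) (x : ℝ) : ℝ := (volume (A ∩ Set.Ioi x)).toReal

lemma mIoi_nonneg (A : Set ℝ) (x : ℝ) : 0 ≤ mIoi A x := ENNReal.toReal_nonneg

lemma vol_inter_ne_top {A : Set ℝ} (hA : volume A ≠ ⊤) (B : Set ℝ) :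
    volume (A ∩ B) ≠ ⊤ :=
  ne_top_of_le_ne_top hA (measure_mono Set.inter_subset_left)

lemma mIoi_anti {A : Set ℝ} (hA : volume A ≠ ⊤) {x y : ℝ} (hxy : x ≤ y) :
    mIoi A y ≤ mIoi A x :=
  ENNReal.toReal_mono (vol_inter_ne_top hA _)
    (measure_mono (Set.inter_subset_inter_right _ (Set.Ioi_subset_Ioi hxy)))

lemma mIoi_lip {A : Set ℝ} (hA : volume A ≠ ⊤) {x y : ℝ} (hxy : x ≤ y) :
    mIoi A x ≤ mIoi A y + (y - x) := by
  have hsub : A ∩ Set.Ioi x ⊆ (A ∩ Set.Ioi y) ∪ Set.Ioc x y := by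
    rintro z ⟨hzA, hzx⟩
    rcases le_or_gt z y with h | h
    · exact Or.inr ⟨hzx, h⟩
    · exact Or.inl ⟨hzA, h⟩
  have h1 : volume (A ∩ Set.Ioi x) ≤ volume (A ∩ Set.Ioi y) + ENNReal.ofReal (y - x) := by
    calc volume (A ∩ Set.Ioi x) ≤ volume ((A ∩ Set.Ioi y) ∪ Set.Ioc x y) := measure_mono hsub
    _ ≤ volume (A ∩ Set.Ioi y) + volume (Set.Ioc x y) := measure_union_le _ _
    _ = volume (A ∩ Set.Ioi y) + ENNReal.ofReal (y - x) := by rw [Real.volume_Ioc]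
  have h2 : mIoi A x ≤ (volume (A ∩ Set.Ioi y) + ENNReal.ofReal (y - x)).toReal :=
    ENNReal.toReal_mono (ENNReal.add_ne_top.2 ⟨vol_inter_ne_top hA _, ENNReal.ofReal_ne_top⟩) h1
  rwa [ENNReal.toReal_add (vol_inter_ne_top hA _) ENNReal.ofReal_ne_top,
    ENNReal.toReal_ofReal (by linarith)] at h2

lemma mIoi_continuous {A : Set ℝ} (hA : volume A ≠ ⊤) : Continuous (mIoi A) := by
  have key : ∀ x y : ℝ, x ≤ y → |mIoi A x - mIoi A y| ≤ |x - y| := by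
    intro x y h
    have h1 := mIoi_anti hA h
    have h2 := mIoi_lip hA h
    rw [abs_of_nonpos (by linarith : x - y ≤ 0)]
    rw [abs_le]
    constructor <;> linarith
  refine (LipschitzWith.of_dist_le_mul (K := 1) fun x y => ?_).continuous
  rw [NNReal.coe_one, one_mul, Real.dist_eq, Real.dist_eq]
  rcases le_total x y with h | h
  · exact key x y h
  · rw [abs_sub_comm (mIoi A x), abs_sub_comm x]; exact key y x h

lemma superadd {A B C : Set ℝ} (hC : volume C ≠ ⊤) (hB : MeasurableSet B)
    (hAB : Disjoint A B) (hsub : A ∪ B ⊆ C) :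
    (volume A).toReal + (volume B).toReal ≤ (volume C).toReal := by
  have h : volume A + volume B ≤ volume C := by
    rw [← measure_union hAB hB]; exact measure_mono hsub
  have hA' : volume A ≠ ⊤ := ne_top_of_le_ne_top hC (measure_mono (hsub.trans' Set.subset_union_left))
  have hB' : volume B ≠ ⊤ := ne_top_of_le_ne_top hC (measure_mono (hsub.trans' Set.subset_union_right))
  rw [← ENNReal.toReal_add hA' hB']
  exact ENNReal.toReal_mono hC h

lemma subadd {A B C : Set ℝ} (hA : volume A ≠ ⊤) (hB : volume B ≠ ⊤) (h : C ⊆ A ∪ B) :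
    (volume C).toReal ≤ (volume A).toReal + (volume B).toReal := by
  have h1 : volume C ≤ volume A + volume B := (measure_mono h).trans (measure_union_le A B)
  rw [← ENNReal.toReal_add hA hB]
  exact ENNReal.toReal_mono (ENNReal.add_ne_top.2 ⟨hA, hB⟩) h1

variable {ι : Type*}

def WS (b ℓ : ι → ℝ) (K : ℝ) (G : Finset ι) : Set ℝ :=
  ⋃ i ∈ G, Set.Ioo (b i - ℓ i) (b i + K * ℓ i)

def VS (b ℓ : ι → ℝ) (K : ℝ) (G : Finset ι) : Set ℝ :=
  ⋃ i ∈ G, Set.Ioo (b i + ℓ i) (b i + K * ℓ i)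

lemma WS_open (b ℓ : ι → ℝ) (K : ℝ) (G : Finset ι) : IsOpen (WS b ℓ K G) :=
  isOpen_biUnion fun _ _ => isOpen_Ioo

lemma VS_open (b ℓ : ι → ℝ) (K : ℝ) (G : Finset ι) : IsOpen (VS b ℓ K G) :=
  isOpen_biUnion fun _ _ => isOpen_Ioo

lemma biUnion_Ioo_ne_top (f g : ι → ℝ) (G : Finset ι) :
    volume (⋃ i ∈ G, Set.Ioo (f i) (g i)) ≠ ⊤ := by
  refine ne_top_of_le_ne_top ?_ (measure_biUnion_finset_le G _)
  exact (ENNReal.sum_lt_top.2 fun i _ => measure_Ioo_lt_top).ne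

lemma WS_ne_top (b ℓ : ι → ℝ) (K : ℝ) (G : Finset ι) : volume (WS b ℓ K G) ≠ ⊤ :=
  biUnion_Ioo_ne_top _ _ _

lemma VS_ne_top (b ℓ : ι → ℝ) (K : ℝ) (G : Finset ι) : volume (VS b ℓ K G) ≠ ⊤ :=
  biUnion_Ioo_ne_top _ _ _


lemma key (K : ℝ) (hK : 1 < K) (b ℓ : ι → ℝ) (F : Finset ι) :
    (∀ i ∈ F, 0 < ℓ i) → ∀ x : ℝ,
      (K - 1) / (K + 1) * mIoi (WS b ℓ K F) x ≤ mIoi (VS b ℓ K F) x := by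
  induction F using Finset.strongInductionOn with
  | _ F IH =>
  intro hℓ
  set q : ℝ := (K - 1) / (K + 1) with hqdef
  have hK1 : (0:ℝ) < K + 1 := by linarith
  have hq0 : 0 < q := div_pos (by linarith) hK1
  have hq1 : q < 1 := by rw [hqdef, div_lt_one hK1]; linarith
  by_contra hcon
  push_neg at hcon
  obtain ⟨x₀, hx₀⟩ := hcon
  have hW : volume (WS b ℓ K F) ≠ ⊤ := WS_ne_top b ℓ K F
  have hV : volume (VS b ℓ K F) ≠ ⊤ := VS_ne_top b ℓ K F
  have hFne : F.Nonempty := by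
    rcases F.eq_empty_or_nonempty with h | h
    · exfalso
      subst h
      have hz : mIoi (WS b ℓ K (∅ : Finset ι)) x₀ = 0 := by
        unfold mIoi WS
        simp
      rw [hz, mul_zero] at hx₀
      exact absurd hx₀ (not_lt.2 (mIoi_nonneg _ _))
    · exact h
  set S : Set ℝ := {x | q * mIoi (WS b ℓ K F) x ≤ mIoi (VS b ℓ K F) x} with hSdef
  have hScl : IsClosed S :=
    isClosed_le (continuous_const.mul (mIoi_continuous hW)) (mIoi_continuous hV)
  set M : ℝ := F.sup' hFne (fun i => b i + K * ℓ i) with hMdef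
  have hIciM : Set.Ici M ⊆ S := by
    intro y hy
    have hWempty : WS b ℓ K F ∩ Set.Ioi y = ∅ := by
      ext z
      simp only [WS, Set.mem_inter_iff, Set.mem_iUnion, Set.mem_Ioo, Set.mem_Ioi,
        Set.mem_empty_iff_false, iff_false, not_and, not_lt]
      rintro ⟨i, hiF, _, hz2⟩
      have h6 := Finset.le_sup' (fun i => b i + K * ℓ i) hiF
      have hyM : M ≤ y := hy
      linarith
    have hz : mIoi (WS b ℓ K F) y = 0 := by
      unfold mIoi
      rw [hWempty]
      simp
    show q * mIoi (WS b ℓ K F) y ≤ mIoi (VS b ℓ K F) y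
    rw [hz, mul_zero]
    exact mIoi_nonneg _ _
  have hx₀S : x₀ ∉ S := fun h => absurd h (not_le.2 hx₀)
  have hSne : Sᶜ.Nonempty := ⟨x₀, hx₀S⟩
  have hbdd : BddAbove Sᶜ := by
    refine ⟨M, fun y hy => ?_⟩
    by_contra h
    push_neg at h
    exact hy (hIciM (le_of_lt h))
  set t : ℝ := sSup Sᶜ with htdef
  have ht_ub : ∀ y, t < y → y ∈ S := by
    intro y hy
    by_contra h
    exact absurd (le_csSup hbdd h) (not_le.2 hy)
  have htS : t ∈ S := by
    by_contra h
    obtain ⟨ε, hε, hball⟩ := Metric.isOpen_iff.1 hScl.isOpen_compl t h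
    have h2 : t + ε / 2 ∈ Sᶜ := hball (by
      rw [Metric.mem_ball, Real.dist_eq, show t + ε / 2 - t = ε / 2 by ring,
        abs_of_nonneg (by linarith : (0:ℝ) ≤ ε / 2)]
      linarith)
    have := le_csSup hbdd h2
    linarith
  have htt : ∀ y, t ≤ y → y ∈ S := by
    intro y hy
    rcases eq_or_lt_of_le hy with h | h
    · rwa [← h]
    · exact ht_ub y h
  have hcontra : ∀ x, x < t → Set.Ici x ⊆ S → False := by
    intro x hx hsub
    obtain ⟨y, hyC, hxy⟩ := exists_lt_of_lt_csSup hSne hx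
    exact hyC (hsub (le_of_lt hxy))
  by_cases hcase : ∃ i ∈ F, b i - ℓ i < t ∧ t ≤ b i + K * ℓ i
  · obtain ⟨i, hiF, h1, h2⟩ := hcase
    have hℓi : 0 < ℓ i := hℓ i hiF
    refine hcontra ((b i - ℓ i + t) / 2) (by linarith) ?_
    intro y hy
    rcases le_or_gt t y with h | h
    · exact htt y h
    · have hy0 : (b i - ℓ i + t) / 2 ≤ y := hy
      have hy1 : b i - ℓ i < y := by linarith
      have hy2 : y < b i + K * ℓ i := lt_of_lt_of_le h h2
      have hcS : q * mIoi (WS b ℓ K F) (b i + K * ℓ i)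
          ≤ mIoi (VS b ℓ K F) (b i + K * ℓ i) := htt _ h2
      have hBsub : Set.Ioo (max (b i + ℓ i) y) (b i + K * ℓ i) ⊆ VS b ℓ K F ∩ Set.Ioi y := by
        rintro z ⟨hz1, hz2⟩
        refine ⟨Set.mem_iUnion₂.2 ⟨i, hiF, lt_of_le_of_lt (le_max_left _ _) hz1, hz2⟩, ?_⟩
        exact lt_of_le_of_lt (le_max_right _ _) hz1
      have hAsub : VS b ℓ K F ∩ Set.Ioi (b i + K * ℓ i) ⊆ VS b ℓ K F ∩ Set.Ioi y :=
        Set.inter_subset_inter_right _ (Set.Ioi_subset_Ioi (le_of_lt hy2))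
      have hdisj : Disjoint (VS b ℓ K F ∩ Set.Ioi (b i + K * ℓ i))
          (Set.Ioo (max (b i + ℓ i) y) (b i + K * ℓ i)) := by
        rw [Set.disjoint_left]
        rintro z ⟨_, hz⟩ ⟨_, hz'⟩
        exact lt_irrefl _ (hz.trans hz')
      have hsuper := superadd (vol_inter_ne_top hV (Set.Ioi y)) measurableSet_Ioo hdisj
        (Set.union_subset hAsub hBsub)
      have hmaxlt : max (b i + ℓ i) y < b i + K * ℓ i := by
        rw [max_lt_iff]
        exact ⟨by nlinarith, hy2⟩
      have hvolB : (volume (Set.Ioo (max (b i + ℓ i) y) (b i + K * ℓ i))).toReal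
          = b i + K * ℓ i - max (b i + ℓ i) y := by
        rw [Real.volume_Ioo, ENNReal.toReal_ofReal (by linarith)]
      have hqK : q * (K + 1) = K - 1 := div_mul_cancel₀ _ (ne_of_gt hK1)
      have hvolB_ge : q * (b i + K * ℓ i - y) ≤ b i + K * ℓ i - max (b i + ℓ i) y := by
        rcases max_cases (b i + ℓ i) y with ⟨hmax, _⟩ | ⟨hmax, _⟩ <;> rw [hmax]
        · have h3 : b i + K * ℓ i - y ≤ (K + 1) * ℓ i := by linarith
          nlinarith
        · nlinarith
      have hkey2 : mIoi (VS b ℓ K F) (b i + K * ℓ i) + q * (b i + K * ℓ i - y)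
          ≤ mIoi (VS b ℓ K F) y := by
        rw [hvolB] at hsuper
        unfold mIoi
        linarith
      have hkey1 : mIoi (WS b ℓ K F) y
          ≤ mIoi (WS b ℓ K F) (b i + K * ℓ i) + (b i + K * ℓ i - y) :=
        mIoi_lip hW (le_of_lt hy2)
      have h7 := mul_le_mul_of_nonneg_left hkey1 hq0.le
      rw [mul_add] at h7
      show q * mIoi (WS b ℓ K F) y ≤ mIoi (VS b ℓ K F) y
      linarith
  · push_neg at hcase
    classical
    set Lft : Finset ι := F.filter (fun i => b i + K * ℓ i < t) with hLdef
    by_cases hLF : Lft = F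
    · have hall : ∀ i ∈ F, b i + K * ℓ i < t := by
        intro i hi
        have h8 : i ∈ Lft := hLF ▸ hi
        exact (Finset.mem_filter.1 h8).2
      have hMt : M < t := (Finset.sup'_lt_iff hFne).2 hall
      exact hcontra M hMt hIciM
    · have hssub : Lft ⊂ F :=
        ⟨Finset.filter_subset _ _,
          fun h => hLF (Finset.Subset.antisymm (Finset.filter_subset _ _) h)⟩
      have IHL := IH Lft hssub (fun i hi => hℓ i (Finset.filter_subset _ _ hi))
      have hWL : volume (WS b ℓ K Lft) ≠ ⊤ := WS_ne_top b ℓ K Lft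
      have hVL : volume (VS b ℓ K Lft) ≠ ⊤ := VS_ne_top b ℓ K Lft
      have hallS : ∀ y, y ∈ S := by
        intro y
        rcases le_or_gt t y with h | h
        · exact htt y h
        · have hα : mIoi (WS b ℓ K F) y ≤ mIoi (WS b ℓ K F) t + mIoi (WS b ℓ K Lft) y := by
            apply subadd (vol_inter_ne_top hW _) (vol_inter_ne_top hWL _)
            rintro z ⟨hzW, hzy⟩
            obtain ⟨i, hiF, hzi⟩ := Set.mem_iUnion₂.1 hzW
            by_cases hi : b i + K * ℓ i < t
            · exact Or.inr ⟨Set.mem_iUnion₂.2 ⟨i, Finset.mem_filter.2 ⟨hiF, hi⟩, hzi⟩, hzy⟩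
            · left
              refine ⟨hzW, ?_⟩
              have h5 : ¬ b i - ℓ i < t := fun hlt => hi (hcase i hiF hlt)
              push_neg at h5
              exact lt_of_le_of_lt h5 hzi.1
          have hβ : mIoi (VS b ℓ K F) t + mIoi (VS b ℓ K Lft) y ≤ mIoi (VS b ℓ K F) y := by
            apply superadd (vol_inter_ne_top hV _)
              ((VS_open b ℓ K Lft).measurableSet.inter measurableSet_Ioi)
            · rw [Set.disjoint_left]
              rintro z ⟨_, hz⟩ ⟨hzV, _⟩
              obtain ⟨i, hiL, hzi⟩ := Set.mem_iUnion₂.1 hzV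
              have h9 : b i + K * ℓ i < t := (Finset.mem_filter.1 hiL).2
              exact lt_irrefl _ ((hzi.2.trans h9).trans hz)
            · apply Set.union_subset
              · exact Set.inter_subset_inter_right _ (Set.Ioi_subset_Ioi h.le)
              · rintro z ⟨hzV, hzy⟩
                obtain ⟨i, hiL, hzi⟩ := Set.mem_iUnion₂.1 hzV
                exact ⟨Set.mem_iUnion₂.2 ⟨i, Finset.filter_subset _ _ hiL, hzi⟩, hzy⟩
          have h3 := IHL y
          have h4 : q * mIoi (WS b ℓ K F) t ≤ mIoi (VS b ℓ K F) t := htS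
          have h5 := mul_le_mul_of_nonneg_left hα hq0.le
          rw [mul_add] at h5
          show q * mIoi (WS b ℓ K F) y ≤ mIoi (VS b ℓ K F) y
          linarith
      exact hx₀S (hallS x₀)


lemma finite1D (K : ℝ) (hK : 1 < K) (b ℓ : ι → ℝ) (F : Finset ι) (hℓ : ∀ i ∈ F, 0 < ℓ i) :
    ENNReal.ofReal ((K - 1) / (K + 1)) * volume (WS b ℓ K F) ≤ volume (VS b ℓ K F) := by
  have hq : (0:ℝ) ≤ (K - 1) / (K + 1) := div_nonneg (by linarith) (by linarith)
  rcases F.eq_empty_or_nonempty with h | hFne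
  · subst h
    have : WS b ℓ K (∅ : Finset ι) = ∅ := by unfold WS; simp
    rw [this]
    simp
  · set x : ℝ := F.inf' hFne (fun i => b i - ℓ i) - 1 with hxdef
    have hWx : WS b ℓ K F ∩ Set.Ioi x = WS b ℓ K F := by
      rw [Set.inter_eq_left]
      rintro z hz
      obtain ⟨i, hiF, hzi⟩ := Set.mem_iUnion₂.1 hz
      have := Finset.inf'_le (fun i => b i - ℓ i) hiF
      simp only [Set.mem_Ioi]
      have := hzi.1
      linarith
    have hVx : VS b ℓ K F ∩ Set.Ioi x = VS b ℓ K F := by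
      rw [Set.inter_eq_left]
      rintro z hz
      obtain ⟨i, hiF, hzi⟩ := Set.mem_iUnion₂.1 hz
      have := Finset.inf'_le (fun i => b i - ℓ i) hiF
      simp only [Set.mem_Ioi]
      have h2 := hzi.1
      have h3 := hℓ i hiF
      linarith
    have hkey := key K hK b ℓ F hℓ x
    unfold mIoi at hkey
    rw [hWx, hVx] at hkey
    calc ENNReal.ofReal ((K - 1) / (K + 1)) * volume (WS b ℓ K F)
        = ENNReal.ofReal ((K - 1) / (K + 1)) * ENNReal.ofReal ((volume (WS b ℓ K F)).toReal) := by
          rw [ENNReal.ofReal_toReal (WS_ne_top b ℓ K F)]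
      _ = ENNReal.ofReal ((K - 1) / (K + 1) * (volume (WS b ℓ K F)).toReal) :=
          (ENNReal.ofReal_mul hq).symm
      _ ≤ ENNReal.ofReal ((volume (VS b ℓ K F)).toReal) := ENNReal.ofReal_le_ofReal hkey
      _ = volume (VS b ℓ K F) := ENNReal.ofReal_toReal (VS_ne_top b ℓ K F)

lemma oneD (K : ℝ) (hK : 1 < K) (b ℓ : ι → ℝ) (hℓ : ∀ i, 0 < ℓ i) :
    ENNReal.ofReal ((K - 1) / (K + 1)) * volume (⋃ i, Set.Ioo (b i - ℓ i) (b i)) ≤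
      volume (⋃ i, Set.Ioo (b i + ℓ i) (b i + K * ℓ i)) := by
  obtain ⟨T, hTc, hTeq⟩ := TopologicalSpace.isOpen_iUnion_countable
    (fun i => Set.Ioo (b i - ℓ i) (b i)) (fun i => isOpen_Ioo)
  rw [← hTeq]
  rcases T.eq_empty_or_nonempty with h | hTne
  · subst h
    simp
  · obtain ⟨f, hf⟩ := (Set.Countable.exists_eq_range hTc hTne)
    rw [hf, Set.biUnion_range]
    have hmono : Monotone (fun N => ⋃ k ∈ Finset.range N, Set.Ioo (b (f k) - ℓ (f k)) (b (f k))) := by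
      intro N M hNM
      exact Set.biUnion_subset_biUnion_left (Finset.range_subset_range.2 hNM)
    have hunion : (⋃ n, Set.Ioo (b (f n) - ℓ (f n)) (b (f n))) =
        ⋃ N, ⋃ k ∈ Finset.range N, Set.Ioo (b (f k) - ℓ (f k)) (b (f k)) := by
      ext z
      simp only [Set.mem_iUnion, Finset.mem_range]
      constructor
      · rintro ⟨n, hn⟩
        exact ⟨n + 1, n, Nat.lt_succ_self n, hn⟩
      · rintro ⟨N, n, _, hn⟩
        exact ⟨n, hn⟩
    rw [hunion, hmono.measure_iUnion, ENNReal.mul_iSup]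
    apply iSup_le
    intro N
    calc ENNReal.ofReal ((K - 1) / (K + 1)) *
          volume (⋃ k ∈ Finset.range N, Set.Ioo (b (f k) - ℓ (f k)) (b (f k)))
        ≤ ENNReal.ofReal ((K - 1) / (K + 1)) *
          volume (WS (fun k => b (f k)) (fun k => ℓ (f k)) K (Finset.range N)) := by
          apply mul_le_mul_right
          apply measure_mono
          apply Set.iUnion₂_mono
          intro k _
          apply Set.Ioo_subset_Ioo_right
          have := hℓ (f k)
          nlinarith
      _ ≤ volume (VS (fun k => b (f k)) (fun k => ℓ (f k)) K (Finset.range N)) :=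
          finite1D K hK _ _ _ (fun k _ => hℓ (f k))
      _ ≤ volume (⋃ i, Set.Ioo (b i + ℓ i) (b i + K * ℓ i)) := by
          apply measure_mono
          apply Set.iUnion₂_subset
          intro k _
          exact Set.subset_iUnion_of_subset (f k) subset_rfl

lemma oneD' (K : ℝ) (hK : 1 < K) (P : ι → Prop) (b ℓ : ι → ℝ) (hℓ : ∀ i, 0 < ℓ i) :
    ENNReal.ofReal ((K - 1) / (K + 1)) *
        volume (⋃ i, {t : ℝ | P i ∧ t ∈ Set.Ioo (b i - ℓ i) (b i)}) ≤
      volume (⋃ i, {t : ℝ | P i ∧ t ∈ Set.Ioo (b i + ℓ i) (b i + K * ℓ i)}) := by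
  have h1 : (⋃ i, {t : ℝ | P i ∧ t ∈ Set.Ioo (b i - ℓ i) (b i)}) =
      ⋃ j : {i // P i}, Set.Ioo (b j.1 - ℓ j.1) (b j.1) := by
    ext z
    simp only [Set.mem_iUnion, Set.mem_setOf_eq]
    constructor
    · rintro ⟨i, hPi, hz⟩
      exact ⟨⟨i, hPi⟩, hz⟩
    · rintro ⟨⟨i, hPi⟩, hz⟩
      exact ⟨i, hPi, hz⟩
  have h2 : (⋃ i, {t : ℝ | P i ∧ t ∈ Set.Ioo (b i + ℓ i) (b i + K * ℓ i)}) =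
      ⋃ j : {i // P i}, Set.Ioo (b j.1 + ℓ j.1) (b j.1 + K * ℓ j.1) := by
    ext z
    simp only [Set.mem_iUnion, Set.mem_setOf_eq]
    constructor
    · rintro ⟨i, hPi, hz⟩
      exact ⟨⟨i, hPi⟩, hz⟩
    · rintro ⟨⟨i, hPi⟩, hz⟩
      exact ⟨i, hPi, hz⟩
  rw [h1, h2]
  exact oneD K hK (fun j : {i // P i} => b j.1) (fun j => ℓ j.1) (fun j => hℓ j.1)

end SCAux

/-- **Shifted-cylinder measure lemma** (Lemma 5.2): for a cylinder
`Q = B_r(y) × (s-r², s)` the shifted cylinder is `Q̂ = B_r(y) × (s+r², s+K₁r²)`. -/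
theorem shifted_cylinder_measure_lemma
    (n : ℕ) (hn : 0 < n) (K₁ : ℝ) (hK₁ : 1 < K₁)
    {ι : Type*} (Y : ι → En n × ℝ) (R : ι → ℝ) (hR : ∀ i, 0 < R i) :
    ENNReal.ofReal ((K₁ - 1) / (K₁ + 1)) * volume (⋃ i, pcyl (Y i) (R i)) ≤
      volume (⋃ i, box (Y i).1 (R i) ((Y i).2 + (R i) ^ 2) ((Y i).2 + K₁ * (R i) ^ 2)) := by
  classical
  have hE : IsOpen (⋃ i, pcyl (Y i) (R i)) :=
    isOpen_iUnion fun i => isOpen_ball.prod isOpen_Ioo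
  have hF : IsOpen (⋃ i, box (Y i).1 (R i) ((Y i).2 + (R i) ^ 2) ((Y i).2 + K₁ * (R i) ^ 2)) :=
    isOpen_iUnion fun i => isOpen_ball.prod isOpen_Ioo
  rw [MeasureTheory.Measure.volume_eq_prod (En n) ℝ, Measure.prod_apply hE.measurableSet,
    Measure.prod_apply hF.measurableSet,
    ← MeasureTheory.lintegral_const_mul' _ _ ENNReal.ofReal_ne_top]
  apply lintegral_mono
  intro x
  have hsE : Prod.mk x ⁻¹' (⋃ i, pcyl (Y i) (R i)) =
      ⋃ i, {t : ℝ | x ∈ ball (Y i).1 (R i) ∧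
        t ∈ Set.Ioo ((Y i).2 - (R i) ^ 2) ((Y i).2)} := by
    ext z
    simp [pcyl, box, Set.mem_iUnion, Set.mem_prod]
  have hsF : Prod.mk x ⁻¹'
      (⋃ i, box (Y i).1 (R i) ((Y i).2 + (R i) ^ 2) ((Y i).2 + K₁ * (R i) ^ 2)) =
      ⋃ i, {t : ℝ | x ∈ ball (Y i).1 (R i) ∧
        t ∈ Set.Ioo ((Y i).2 + (R i) ^ 2) ((Y i).2 + K₁ * (R i) ^ 2)} := by
    ext z
    simp [box, Set.mem_iUnion, Set.mem_prod]
  simp only [hsE, hsF]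
  exact SCAux.oneD' K₁ hK₁ (fun i => x ∈ ball (Y i).1 (R i)) (fun i => (Y i).2)
    (fun i => (R i) ^ 2) (fun i => pow_pos (hR i) 2)
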